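/- For every real number x with 0 < x < 4, the series ∑_{k=1}^{∞} x^k/(k·C(2k, k)) converges and equals 2·√x·arcsin(√x/2)/√(4-x); in particular, ∑_{k=1}^{∞} 2^k/(k·C(2k, k)) = π/2. -/

import Mathlib

open Real

section Aux
open intervalIntegral MeasureTheory


lemma beta_nat (a b : ℕ) : ∫ s in (0:ℝ)..1, s ^ a * (1 - s) ^ b
    = (a.factorial * b.factorial : ℝ) / (a + b + 1).factorial := by
  induction b generalizing a with
  | zero =>
    simp only [pow_zero, mul_one]
    rw [integral_pow, one_pow, zero_pow (by omega : a+1 ≠ 0), sub_zero, Nat.add_zero,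
      Nat.factorial_succ, Nat.factorial_zero]
    push_cast
    rw [mul_one, mul_comm ((a:ℝ)+1) _, ← div_div,
      div_self (by positivity : (a.factorial:ℝ) ≠ 0)]
  | succ b IH =>
    have key : ∫ s in (0:ℝ)..1,
        (((a:ℝ)+1) * s ^ a * (1-s)^(b+1) - ((b:ℝ)+1) * s^(a+1) * (1-s)^b) = 0 := by
      rw [integral_eq_sub_of_hasDerivAt (f := fun s : ℝ => s^(a+1) * (1-s)^(b+1))
        (fun s _ => ?_) (by apply Continuous.intervalIntegrable; continuity)]
      · simp
      · have h1 : HasDerivAt (fun s : ℝ => s^(a+1)) (((a:ℝ)+1) * s ^ a) s := by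
          simpa using hasDerivAt_pow (a+1) s
        have h2 : HasDerivAt (fun s : ℝ => (1-s)^(b+1)) (-(((b:ℝ)+1) * (1-s) ^ b)) s := by
          have := ((hasDerivAt_id s).const_sub 1).pow (b+1)
          simp at this
          exact this
        have := h1.mul h2
        refine this.congr_deriv ?_
        push_cast
        ring
    have int1 : IntervalIntegrable (fun s : ℝ => s ^ a * (1-s)^(b+1)) MeasureTheory.volume 0 1 := by
      apply Continuous.intervalIntegrable; continuity
    have int2 : IntervalIntegrable (fun s : ℝ => s ^ (a+1) * (1-s)^b) MeasureTheory.volume 0 1 := by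
      apply Continuous.intervalIntegrable; continuity
    have expand : (fun s : ℝ =>
        (((a:ℝ)+1) * s ^ a * (1-s)^(b+1) - ((b:ℝ)+1) * s^(a+1) * (1-s)^b))
        = fun s : ℝ => ((a:ℝ)+1) * (s ^ a * (1-s)^(b+1)) - ((b:ℝ)+1) * (s^(a+1) * (1-s)^b) := by
      funext s; ring
    rw [expand, integral_sub ((int1).const_mul _) ((int2).const_mul _),
      intervalIntegral.integral_const_mul, intervalIntegral.integral_const_mul, IH (a+1), sub_eq_zero] at key
    have ha : ((a:ℝ)+1) ≠ 0 := by positivity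
    rw [show a + (b+1) + 1 = a+1+b+1 from by ring]
    have e2 : ((a+1).factorial : ℝ) = ((a:ℝ)+1) * a.factorial := by
      rw [Nat.factorial_succ]; push_cast; ring
    have e3 : ((b+1).factorial : ℝ) = ((b:ℝ)+1) * b.factorial := by
      rw [Nat.factorial_succ]; push_cast; ring
    rw [e2] at key
    rw [e3]
    field_simp at key ⊢
    nlinarith [key]


lemma arctan_integral {x : ℝ} (hx0 : 0 < x) (hx4 : x < 4) :
    ∫ s in (0:ℝ)..1, 2*x / ((4-x) + x*(2*s-1)^2)
      = 2 * Real.sqrt x * Real.arcsin (Real.sqrt x / 2) / Real.sqrt (4 - x) := by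
  have h4x : (0:ℝ) < 4 - x := by linarith
  set a := Real.sqrt (4 - x) with ha_def
  set b := Real.sqrt x with hb_def
  have ha : 0 < a := Real.sqrt_pos.mpr h4x
  have hb : 0 < b := Real.sqrt_pos.mpr hx0
  have ha2 : a^2 = 4 - x := Real.sq_sqrt h4x.le
  have hb2 : b^2 = x := Real.sq_sqrt hx0.le
  set c := b / a with hc_def
  have hc : 0 < c := div_pos hb ha
  have hc2 : c^2 = x / (4-x) := by rw [hc_def, div_pow, ha2, hb2]
  have hden : ∀ s : ℝ, 0 < (4-x) + x*(2*s-1)^2 := fun s => by positivity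
  have key : ∫ s in (0:ℝ)..1, 2*x / ((4-x) + x*(2*s-1)^2)
      = (fun s : ℝ => c * Real.arctan (c*(2*s-1))) 1
        - (fun s : ℝ => c * Real.arctan (c*(2*s-1))) 0 := by
    refine integral_eq_sub_of_hasDerivAt (f := fun s : ℝ => c * Real.arctan (c*(2*s-1)))
      (f' := fun s : ℝ => 2*x / ((4-x) + x*(2*s-1)^2)) (fun s _ => ?_) ?_
    · 
      have hinner : HasDerivAt (fun s : ℝ => c*(2*s-1)) (c*2) s := by
        simpa using (((hasDerivAt_id s).const_mul 2).sub_const 1).const_mul c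
      have := ((Real.hasDerivAt_arctan (c*(2*s-1))).comp s hinner).const_mul c
      refine this.congr_deriv ?_
      symm
      have h1 : 1 + (c*(2*s-1))^2 = ((4-x) + x*(2*s-1)^2) / (4-x) := by
        rw [mul_pow, hc2]; field_simp
      have hcx : b^2*(a⁻¹)^2*(4-x) = x := by
        rw [hb2, ← ha2, inv_pow]
        field_simp
      rw [h1]
      field_simp
      linear_combination (-1)*hcx
    · apply Continuous.intervalIntegrable
      apply Continuous.div continuous_const
      · continuity
      · intro s; exact (hden s).ne'
  rw [key]
  simp only []
  rw [show c*(2*(1:ℝ)-1) = c by ring, show c*(2*(0:ℝ)-1) = -c by ring, Real.arctan_neg]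
  have harcsin : Real.arctan c = Real.arcsin (b / 2) := by
    rw [Real.arcsin_eq_arctan]
    · congr 1
      rw [div_pow, hb2, show ((2:ℝ)^2) = 4 by norm_num,
        show (1 : ℝ) - x/4 = (4-x)/4 by ring]
      rw [show Real.sqrt ((4-x)/4) = a / 2 by
        rw [ha_def, Real.sqrt_div h4x.le,
          show Real.sqrt 4 = 2 by rw [show (4:ℝ) = 2^2 by norm_num, Real.sqrt_sq (by norm_num : (0:ℝ) ≤ 2)]]]
      rw [hc_def]
      field_simp
    · constructor
      · have : 0 < b/2 := by positivity
        linarith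
      · have hb4 : b < 2 := by
          have h2 := Real.sqrt_lt_sqrt hx0.le hx4
          rw [show Real.sqrt 4 = 2 by
            rw [show (4:ℝ) = 2^2 by norm_num, Real.sqrt_sq (by norm_num : (0:ℝ) ≤ 2)]] at h2
          exact h2
        linarith
  rw [harcsin, hc_def]
  ring

lemma main_part (x : ℝ) (hx0 : 0 < x) (hx4 : x < 4) :
    HasSum (fun k : ℕ => x ^ (k + 1) / (((k : ℝ) + 1) * (Nat.choose (2 * (k + 1)) (k + 1) : ℝ)))
      (2 * Real.sqrt x * Real.arcsin (Real.sqrt x / 2) / Real.sqrt (4 - x)) := by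
  set μ : Measure ℝ := volume.restrict (Set.Ioc 0 1) with hμ
  set F : ℕ → ℝ → ℝ := fun n s => (x^(n+1)/2) * (s*(1-s))^n with hF
  have hcont : ∀ n, Continuous (F n) := by
    intro n; apply Continuous.mul continuous_const; continuity
  have hInt : ∀ n, Integrable (F n) μ := fun n => (hcont n).integrableOn_Ioc
  -- value of each integral
  have hchoose : ∀ n : ℕ, ((n:ℝ) + 1) * (Nat.choose (2*(n+1)) (n+1) : ℝ)
      * ((n.factorial : ℝ) * n.factorial) = 2 * ((n + n + 1).factorial : ℝ) := by
    intro n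
    have h := Nat.choose_mul_factorial_mul_factorial (by omega : n+1 ≤ 2*(n+1))
    have h2 : 2*(n+1) - (n+1) = n+1 := by omega
    rw [h2] at h
    have hcast : (Nat.choose (2*(n+1)) (n+1) : ℝ) * ((n+1).factorial : ℝ)
        * ((n+1).factorial : ℝ) = ((2*(n+1)).factorial : ℝ) := by exact_mod_cast congrArg Nat.cast h
    have e1 : ((n+1).factorial : ℝ) = ((n:ℝ)+1) * n.factorial := by
      rw [Nat.factorial_succ]; push_cast; ring
    have e2 : ((2*(n+1)).factorial : ℝ) = 2*((n:ℝ)+1) * ((n+n+1).factorial : ℝ) := by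
      rw [show 2*(n+1) = (n+n+1)+1 from by ring, Nat.factorial_succ]
      push_cast; ring
    rw [e1, e2] at hcast
    have hn1 : ((n:ℝ)+1) ≠ 0 := by positivity
    apply mul_left_cancel₀ hn1
    linear_combination hcast
  have hval : ∀ n : ℕ, ∫ s, F n s ∂μ
      = x ^ (n + 1) / (((n : ℝ) + 1) * (Nat.choose (2 * (n + 1)) (n + 1) : ℝ)) := by
    intro n
    have : ∫ s, F n s ∂μ = ∫ s in (0:ℝ)..1, F n s := (integral_of_le zero_le_one).symm
    rw [this]
    have : ∀ s : ℝ, F n s = (x^(n+1)/2) * (s^n * (1-s)^n) := by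
      intro s; rw [hF]; simp only [mul_pow]
    simp only [this]
    rw [intervalIntegral.integral_const_mul, beta_nat n n]
    have hcp : 0 < (Nat.choose (2*(n+1)) (n+1) : ℝ) := by
      exact_mod_cast Nat.choose_pos (by omega : n+1 ≤ 2*(n+1))
    rw [div_mul_div_comm, div_eq_div_iff (by positivity) (by positivity)]
    linear_combination x^(n+1) * hchoose n
  -- summability of integrals of norms
  have hIocm : μ Set.univ ≤ 1 := by
    rw [hμ, Measure.restrict_apply_univ, Real.volume_Ioc]
    norm_num
  have hnormval : ∀ n : ℕ, (∫ s, ‖F n s‖ ∂μ) ≤ (x/2) * (x/4)^n := by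
    intro n
    have hb : ∀ s ∈ Set.Ioc (0:ℝ) 1, ‖‖F n s‖‖ ≤ (x/2) * (x/4)^n := by
      intro s hs
      rw [norm_norm, hF]
      simp only []
      rw [norm_mul, norm_pow]
      have h1 : ‖x^(n+1)/2‖ = x^(n+1)/2 := by
        rw [Real.norm_of_nonneg (by positivity)]
      have h2 : ‖s*(1-s)‖ ≤ 1/4 := by
        rw [Real.norm_of_nonneg (by nlinarith [hs.1, hs.2])]
        nlinarith [sq_nonneg (2*s-1)]
      calc ‖x^(n+1)/2‖ * ‖s*(1-s)‖^n ≤ (x^(n+1)/2) * (1/4)^n := by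
            rw [h1]
            exact mul_le_mul_of_nonneg_left (pow_le_pow_left₀ (norm_nonneg _) h2 n)
              (by positivity)
        _ = (x/2) * (x/4)^n := by rw [div_pow, div_pow, pow_succ]; ring
    have := norm_setIntegral_le_of_norm_le_const (μ := volume) (s := Set.Ioc (0:ℝ) 1)
      (f := fun s => ‖F n s‖) (by rw [Real.volume_Ioc]; norm_num) hb
    rw [Real.volume_real_Ioc_of_le zero_le_one] at this
    simp only [sub_zero, ENNReal.toReal_ofReal (by norm_num : (0:ℝ) ≤ 1), mul_one] at this
    calc (∫ s, ‖F n s‖ ∂μ) ≤ ‖∫ s in Set.Ioc (0:ℝ) 1, ‖F n s‖‖ := le_abs_self _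
      _ ≤ (x/2) * (x/4)^n := this
  have hsummable : Summable (fun n : ℕ => ∫ s, ‖F n s‖ ∂μ) := by
    apply Summable.of_nonneg_of_le
      (fun n => integral_nonneg (fun s => norm_nonneg _)) hnormval
    exact (summable_geometric_of_lt_one (by positivity) (by linarith)).mul_left _
  have hsum := MeasureTheory.hasSum_integral_of_summable_integral_norm hInt hsummable
  -- evaluate the integral of the sum
  have htsum : ∫ s, (∑' n, F n s) ∂μ
      = 2 * Real.sqrt x * Real.arcsin (Real.sqrt x / 2) / Real.sqrt (4 - x) := by
    rw [hμ]
    rw [setIntegral_congr_fun measurableSet_Ioc (g := fun s => 2*x / ((4-x) + x*(2*s-1)^2)) ?_]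
    · rw [← integral_of_le zero_le_one]
      exact arctan_integral hx0 hx4
    · intro s hs
      simp only [hF]
      have hr0 : 0 ≤ x*(s*(1-s)) :=
        mul_nonneg hx0.le (mul_nonneg hs.1.le (by linarith [hs.2]))
      have hr1 : x*(s*(1-s)) < 1 := by nlinarith [sq_nonneg (2*s-1), hs.1, hs.2]
      have : ∀ n : ℕ, x^(n+1)/2 * (s*(1-s))^n = (x/2) * (x*(s*(1-s)))^n := by
        intro n; rw [mul_pow x (s*(1-s)) n, pow_succ]; ring
      rw [tsum_congr this, tsum_mul_left, tsum_geometric_of_lt_one hr0 hr1]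
      have hd : (4-x) + x*(2*s-1)^2 = 4 * (1 - x*(s*(1-s))) := by ring
      have h1r : 0 < 1 - x*(s*(1-s)) := by linarith
      rw [hd, eq_div_iff (by positivity : (4:ℝ) * (1 - x*(s*(1-s))) ≠ 0)]
      generalize 1 - x*(s*(1-s)) = r at h1r ⊢
      field_simp
      ring
  rw [htsum] at hsum
  have heq : (fun n : ℕ => ∫ s, F n s ∂μ)
      = fun k : ℕ => x ^ (k + 1) / (((k : ℝ) + 1) * (Nat.choose (2 * (k + 1)) (k + 1) : ℝ)) :=
    funext hval
  rw [← heq]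
  exact hsum

end Aux

/-- For `0 < x < 4`, `∑_{k=1}^∞ x^k/(k C(2k,k)) = 2 √x arcsin(√x/2)/√(4-x)`;
in particular `∑_{k=1}^∞ 2^k/(k C(2k,k)) = π/2`. -/
theorem central_binomial_series :
    (∀ x : ℝ, 0 < x → x < 4 →
      HasSum (fun k : ℕ => x ^ (k + 1) / (((k : ℝ) + 1) * (Nat.choose (2 * (k + 1)) (k + 1) : ℝ)))
        (2 * Real.sqrt x * Real.arcsin (Real.sqrt x / 2) / Real.sqrt (4 - x))) ∧
    HasSum (fun k : ℕ => (2 : ℝ) ^ (k + 1) / (((k : ℝ) + 1) * (Nat.choose (2 * (k + 1)) (k + 1) : ℝ)))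
      (Real.pi / 2) := by
  refine ⟨fun x hx0 hx4 => main_part x hx0 hx4, ?_⟩
  have h := main_part 2 (by norm_num) (by norm_num)
  have h42 : (4:ℝ) - 2 = 2 := by norm_num
  rw [h42] at h
  have hs2 : Real.sqrt 2 ≠ 0 := by positivity
  have harc : Real.arcsin (Real.sqrt 2 / 2) = Real.pi / 4 := by
    rw [← Real.sin_pi_div_four, Real.arcsin_sin (by linarith [Real.pi_pos])
      (by linarith [Real.pi_pos])]
  rw [harc] at h
  have : 2 * Real.sqrt 2 * (Real.pi / 4) / Real.sqrt 2 = Real.pi / 2 := by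
    field_simp
    ring
  rwa [this] at h
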